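/- Let $\zeta_1,\dots,\zeta_t$ be $\{0,1\}$-valued random variables forming a read-$k$ family: there exist independent random variables $\psi_1,\dots,\psi_s$ such that each $\zeta_j$ is a function of $(\psi_i : i \in S_j)$ for some $S_j \subseteq [s]$, and each index $i$ belongs to at most $k$ of the sets $S_j$. If $\sum_j \mathbb{E}\zeta_j \le t\rho$ then for any $\lambda \in [\rho, 1]$, $\mathbb{P}(\zeta_1 + \cdots + \zeta_t > \lambda t) < \exp[-D(\lambda \| \rho) t / k]$, where $D(\lambda\|\rho) = \lambda\log(\lambda/\rho) + (1-\lambda)\log((1-\lambda)/(1-\rho))$. -/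

import Mathlib

open scoped Classical BigOperators

/-- Padded AM-GM: product of at most `k` nonnegative reals. -/
lemma lemA {ι : Type*} {k : ℕ} (hk : 0 < k) (F : Finset ι) (hF : F.card ≤ k)
    (c : ι → ℝ) (hc : ∀ j ∈ F, 0 ≤ c j) :
    ∏ j ∈ F, c j ≤ (∑ j ∈ F, c j ^ k) / k + 1 - F.card / k := by
  classical
  have hkR : (0:ℝ) < k := by exact_mod_cast hk
  set G : Finset (Option ι) := insert none (F.image some) with hG
  have hnone : none ∉ F.image some := by simp
  have key := Real.geom_mean_le_arith_mean_weighted G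
      (fun x => x.elim (1 - F.card / k) (fun _ => (k:ℝ)⁻¹))
      (fun x => x.elim 1 (fun j => c j ^ k)) ?_ ?_ ?_
  · rw [hG, Finset.prod_insert hnone, Finset.sum_insert hnone,
      Finset.prod_image (by simp), Finset.sum_image (by simp)] at key
    simp only [Option.elim] at key
    have hprod : ∀ j ∈ F, (c j ^ k : ℝ) ^ ((k:ℝ)⁻¹) = c j := by
      intro j hj
      rw [← Real.rpow_natCast (c j) k, ← Real.rpow_mul (hc j hj),
        mul_inv_cancel₀ hkR.ne', Real.rpow_one]
    rw [Finset.prod_congr rfl hprod, Real.one_rpow, one_mul] at key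
    calc ∏ j ∈ F, c j ≤ (1 - F.card / k) * 1 + ∑ j ∈ F, (k:ℝ)⁻¹ * c j ^ k := key
      _ = (∑ j ∈ F, c j ^ k) / k + 1 - F.card / k := by
          rw [← Finset.mul_sum]
          field_simp
          ring
  · intro x hx
    rcases x with _ | j
    · simp only [Option.elim]
      have : (F.card : ℝ) / k ≤ 1 := by
        rw [div_le_one hkR]; exact_mod_cast hF
      linarith
    · simp only [Option.elim]; positivity
  · rw [hG, Finset.sum_insert hnone, Finset.sum_image (by simp)]
    simp only [Option.elim, Finset.sum_const, nsmul_eq_mul]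
    field_simp
    ring
  · intro x hx
    rcases x with _ | j
    · simp [Option.elim]
    · simp only [Option.elim]
      have hj : j ∈ F := by
        rw [hG] at hx
        simp at hx
        exact hx
      exact pow_nonneg (hc j hj) k

/-- Equal-exponent weighted Hölder over a finite type. -/
lemma lemB {ι β : Type*} [Fintype β] {k : ℕ} (hk : 0 < k)
    (q : β → ℝ) (hq0 : ∀ b, 0 ≤ q b) (hq1 : ∑ b, q b = 1)
    (F : Finset ι) (hF : F.card ≤ k)
    (h : ι → β → ℝ) (hh : ∀ j ∈ F, ∀ b, 0 ≤ h j b) :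
    ∑ b, q b * ∏ j ∈ F, h j b ≤ ∏ j ∈ F, (∑ b, q b * h j b ^ k) ^ ((k:ℝ)⁻¹) := by
  classical
  have hkR : (0:ℝ) < k := by exact_mod_cast hk
  set T : ι → ℝ := fun j => ∑ b, q b * h j b ^ k with hT
  have hT0 : ∀ j ∈ F, 0 ≤ T j := fun j hj => Finset.sum_nonneg fun b _ =>
    mul_nonneg (hq0 b) (pow_nonneg (hh j hj b) k)
  by_cases hzero : ∃ j₀ ∈ F, T j₀ = 0
  · obtain ⟨j₀, hj₀, hTj₀⟩ := hzero
    have hterm : ∀ b, q b * h j₀ b ^ k = 0 := by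
      intro b
      have := (Finset.sum_eq_zero_iff_of_nonneg (fun b _ =>
        mul_nonneg (hq0 b) (pow_nonneg (hh j₀ hj₀ b) k))).mp hTj₀ b (Finset.mem_univ b)
      exact this
    have hLHS : ∑ b, q b * ∏ j ∈ F, h j b = 0 := by
      apply Finset.sum_eq_zero
      intro b _
      rcases eq_or_lt_of_le (hq0 b) with hq | hq
      · rw [← hq, zero_mul]
      · have : h j₀ b ^ k = 0 := by
          have := hterm b
          rcases mul_eq_zero.mp this with h1 | h2
          · exact absurd h1.symm hq.ne
          · exact h2
        have hz : h j₀ b = 0 := pow_eq_zero_iff hk.ne' |>.mp this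
        rw [Finset.prod_eq_zero hj₀ hz, mul_zero]
    rw [hLHS]
    exact Finset.prod_nonneg fun j hj => Real.rpow_nonneg (hT0 j hj) _
  · push_neg at hzero
    have hTpos : ∀ j ∈ F, 0 < T j := fun j hj => (hT0 j hj).lt_of_ne' (hzero j hj)
    set A : ι → ℝ := fun j => T j ^ ((k:ℝ)⁻¹) with hA
    have hApos : ∀ j ∈ F, 0 < A j := fun j hj => Real.rpow_pos_of_pos (hTpos j hj) _
    have hAk : ∀ j ∈ F, A j ^ k = T j := by
      intro j hj
      rw [hA, ← Real.rpow_natCast (T j ^ ((k:ℝ)⁻¹)) k, ← Real.rpow_mul (hT0 j hj),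
        inv_mul_cancel₀ hkR.ne', Real.rpow_one]
    set c : ι → β → ℝ := fun j b => h j b / A j with hc
    have hc0 : ∀ j ∈ F, ∀ b, 0 ≤ c j b := fun j hj b =>
      div_nonneg (hh j hj b) (hApos j hj).le
    have hck : ∀ j ∈ F, ∑ b, q b * c j b ^ k = 1 := by
      intro j hj
      have : ∀ b, q b * c j b ^ k = (q b * h j b ^ k) / T j := by
        intro b
        rw [hc]
        simp only [div_pow, ← hAk j hj]
        field_simp
      rw [Finset.sum_congr rfl (fun b _ => this b), ← Finset.sum_div]
      exact div_self (hTpos j hj).ne'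
    have hpoint : ∀ b, q b * ∏ j ∈ F, c j b ≤
        q b * ((∑ j ∈ F, c j b ^ k) / k + 1 - F.card / k) := by
      intro b
      exact mul_le_mul_of_nonneg_left (lemA hk F hF (fun j => c j b)
        (fun j hj => hc0 j hj b)) (hq0 b)
    have hmid : ∑ b, q b * ∏ j ∈ F, c j b ≤ 1 := by
      calc ∑ b, q b * ∏ j ∈ F, c j b
          ≤ ∑ b, q b * ((∑ j ∈ F, c j b ^ k) / k + 1 - F.card / k) :=
            Finset.sum_le_sum fun b _ => hpoint b
        _ = ∑ b, ((q b * ∑ j ∈ F, c j b ^ k) / k + q b * (1 - F.card / k)) := by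
            apply Finset.sum_congr rfl; intro b _; ring
        _ = (∑ b, ∑ j ∈ F, q b * c j b ^ k) / k + (1 - F.card / k) := by
            rw [Finset.sum_add_distrib, ← Finset.sum_div, ← Finset.sum_mul, hq1, one_mul]
            congr 2
            exact Finset.sum_congr rfl fun b _ => Finset.mul_sum _ _ _
        _ = (∑ j ∈ F, ∑ b, q b * c j b ^ k) / k + (1 - F.card / k) := by
            rw [Finset.sum_comm]
        _ = 1 := by
            rw [Finset.sum_congr rfl hck, Finset.sum_const, nsmul_eq_mul, mul_one]
            field_simp
            ring
    have hhac : ∀ j ∈ F, ∀ b, h j b = A j * c j b := by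
      intro j hj b
      rw [hc]
      rw [mul_div_assoc', mul_comm, mul_div_assoc, div_self (hApos j hj).ne', mul_one]
    calc ∑ b, q b * ∏ j ∈ F, h j b
        = ∑ b, q b * ((∏ j ∈ F, A j) * ∏ j ∈ F, c j b) := by
          apply Finset.sum_congr rfl
          intro b _
          rw [← Finset.prod_mul_distrib]
          congr 1
          exact Finset.prod_congr rfl (fun j hj => hhac j hj b)
      _ = (∏ j ∈ F, A j) * ∑ b, q b * ∏ j ∈ F, c j b := by
          rw [Finset.mul_sum]; congr 1; ext b; ring
      _ ≤ (∏ j ∈ F, A j) * 1 :=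
          mul_le_mul_of_nonneg_left hmid
            (Finset.prod_nonneg fun j hj => (hApos j hj).le)
      _ = ∏ j ∈ F, (∑ b, q b * h j b ^ k) ^ ((k:ℝ)⁻¹) := by rw [mul_one]

universe u

/-- Finner's inequality with equal exponents `k` (finite product spaces). -/
lemma lemC {ι : Type*} {k : ℕ} (hk : 0 < k) :
    ∀ (s : ℕ) (α : Fin s → Type u) [inst : ∀ i, Fintype (α i)]
      (p : ∀ i, α i → ℝ), (∀ i a, 0 ≤ p i a) → (∀ i, ∑ a, p i a = 1) →
    ∀ (J : Finset ι) (f : ι → (∀ i, α i) → ℝ) (S : ι → Finset (Fin s)),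
      (∀ j ∈ J, ∀ ω, 0 ≤ f j ω) →
      (∀ j ∈ J, ∀ ω ω', (∀ i ∈ S j, ω i = ω' i) → f j ω = f j ω') →
      (∀ i, (J.filter (fun j => i ∈ S j)).card ≤ k) →
      ∑ ω, (∏ i, p i (ω i)) * ∏ j ∈ J, f j ω ≤
        ∏ j ∈ J, (∑ ω, (∏ i, p i (ω i)) * f j ω ^ k) ^ ((k:ℝ)⁻¹) := by
  classical
  have hkR : (0:ℝ) < k := by exact_mod_cast hk
  have hrpow : ∀ x : ℝ, 0 ≤ x → (x ^ k : ℝ) ^ ((k:ℝ)⁻¹) = x := by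
    intro x hx
    rw [← Real.rpow_natCast x k, ← Real.rpow_mul hx, mul_inv_cancel₀ hkR.ne', Real.rpow_one]
  have hrpowk : ∀ x : ℝ, 0 ≤ x → (x ^ ((k:ℝ)⁻¹)) ^ k = x := by
    intro x hx
    rw [← Real.rpow_natCast (x ^ ((k:ℝ)⁻¹)) k, ← Real.rpow_mul hx,
      inv_mul_cancel₀ hkR.ne', Real.rpow_one]
  intro s
  induction s with
  | zero =>
    intro α inst p hp0 hp1 J f S hf0 hdep hcard
    rw [Fintype.sum_unique]
    have hR : ∀ j ∈ J, (∑ ω : (∀ i : Fin 0, α i), (∏ i, p i (ω i)) * f j ω ^ k) ^ ((k:ℝ)⁻¹)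
        = f j default := by
      intro j hj
      rw [Fintype.sum_unique]
      simp only [Fin.prod_univ_zero, one_mul]
      exact hrpow _ (hf0 j hj default)
    rw [Finset.prod_congr rfl hR]
    simp only [Fin.prod_univ_zero, one_mul]
    exact le_refl _
  | succ s ih =>
    intro α inst p hp0 hp1 J f S hf0 hdep hcard
    have hq1 : ∑ a, p 0 a = 1 := hp1 0
    have hne : Nonempty (α 0) := by
      by_contra h
      rw [not_nonempty_iff] at h
      rw [Finset.univ_eq_empty, Finset.sum_empty] at hq1
      exact one_ne_zero hq1.symm
    obtain ⟨a₀⟩ := hne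
    set α' : Fin s → Type u := fun i => α i.succ with hα'
    set p' : ∀ i, α' i → ℝ := fun i => p i.succ with hp'
    set S' : ι → Finset (Fin s) := fun j => Finset.univ.filter (fun i => i.succ ∈ S j) with hS'
    set g : ι → (∀ i, α' i) → ℝ :=
      fun j ω' => (∑ a, p 0 a * f j (Fin.cons a ω') ^ k) ^ ((k:ℝ)⁻¹) with hg
    -- sum splitting along the first coordinate
    have hsplit : ∀ F : (∀ i : Fin (s+1), α i) → ℝ,
        ∑ ω, F ω = ∑ ω' : (∀ i, α' i), ∑ a, F (Fin.cons a ω') := by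
      intro F
      rw [← Equiv.sum_comp (Fin.consEquiv α) F, Fintype.sum_prod_type, Finset.sum_comm]
      rfl
    have hw : ∀ (a : α 0) (ω' : ∀ i, α' i),
        (∏ i, p i (Fin.cons a ω' i)) = p 0 a * ∏ i : Fin s, p' i (ω' i) := by
      intro a ω'
      rw [Fin.prod_univ_succ]
      simp [hp']
    have hP'0 : ∀ ω' : ∀ i, α' i, 0 ≤ ∏ i, p' i (ω' i) :=
      fun ω' => Finset.prod_nonneg fun i _ => hp0 i.succ _
    have hg0 : ∀ j ∈ J, ∀ ω', 0 ≤ g j ω' := by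
      intro j hj ω'
      exact Real.rpow_nonneg (Finset.sum_nonneg fun a _ =>
        mul_nonneg (hp0 0 a) (pow_nonneg (hf0 j hj _) k)) _
    have hinner0 : ∀ j ∈ J, ∀ ω', 0 ≤ ∑ a, p 0 a * f j (Fin.cons a ω') ^ k := by
      intro j hj ω'
      exact Finset.sum_nonneg fun a _ => mul_nonneg (hp0 0 a) (pow_nonneg (hf0 j hj _) k)
    -- key pointwise inequality
    have hkey : ∀ ω' : ∀ i, α' i,
        ∑ a, p 0 a * ∏ j ∈ J, f j (Fin.cons a ω') ≤ ∏ j ∈ J, g j ω' := by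
      intro ω'
      set J₁ := J.filter (fun j => (0 : Fin (s+1)) ∈ S j) with hJ₁
      set J₂ := J.filter (fun j => (0 : Fin (s+1)) ∉ S j) with hJ₂
      have hconst : ∀ j ∈ J₂, ∀ a, f j (Fin.cons a ω') = f j (Fin.cons a₀ ω') := by
        intro j hj a
        obtain ⟨hjJ, hj0⟩ := Finset.mem_filter.mp hj
        apply hdep j hjJ
        intro i
        refine Fin.cases (fun hi => absurd hi hj0) (fun i' hi => ?_) i
        simp [Fin.cons_succ]
      set C := ∏ j ∈ J₂, f j (Fin.cons a₀ ω') with hC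
      have hC0 : 0 ≤ C :=
        Finset.prod_nonneg fun j hj => hf0 j (Finset.mem_filter.mp hj).1 _
      have step1 : ∀ a, ∏ j ∈ J, f j (Fin.cons a ω')
          = (∏ j ∈ J₁, f j (Fin.cons a ω')) * C := by
        intro a
        rw [← Finset.prod_filter_mul_prod_filter_not J (fun j => (0 : Fin (s+1)) ∈ S j)]
        congr 1
        exact Finset.prod_congr rfl fun j hj => hconst j hj a
      have step2 : ∑ a, p 0 a * ∏ j ∈ J, f j (Fin.cons a ω')
          = C * ∑ a, p 0 a * ∏ j ∈ J₁, f j (Fin.cons a ω') := by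
        rw [Finset.mul_sum]
        apply Finset.sum_congr rfl
        intro a _
        rw [step1 a]; ring
      have hJ₁card : J₁.card ≤ k := hcard 0
      have step3 : ∑ a, p 0 a * ∏ j ∈ J₁, f j (Fin.cons a ω')
          ≤ ∏ j ∈ J₁, g j ω' := by
        have := lemB hk (p 0) (hp0 0) hq1 J₁ hJ₁card
          (fun j a => f j (Fin.cons a ω'))
          (fun j hj a => hf0 j (Finset.mem_filter.mp hj).1 _)
        exact this
      have step4 : ∀ j ∈ J₂, g j ω' = f j (Fin.cons a₀ ω') := by
        intro j hj
        rw [hg]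
        simp only
        have : ∀ a, p 0 a * f j (Fin.cons a ω') ^ k
            = p 0 a * f j (Fin.cons a₀ ω') ^ k := by
          intro a; rw [hconst j hj a]
        rw [Finset.sum_congr rfl fun a _ => this a, ← Finset.sum_mul, hq1, one_mul]
        exact hrpow _ (hf0 j (Finset.mem_filter.mp hj).1 _)
      calc ∑ a, p 0 a * ∏ j ∈ J, f j (Fin.cons a ω')
          = C * ∑ a, p 0 a * ∏ j ∈ J₁, f j (Fin.cons a ω') := step2
        _ ≤ C * ∏ j ∈ J₁, g j ω' := by
            apply mul_le_mul_of_nonneg_left step3 hC0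
        _ = (∏ j ∈ J₁, g j ω') * ∏ j ∈ J₂, g j ω' := by
            rw [hC, Finset.prod_congr rfl step4]; ring
        _ = ∏ j ∈ J, g j ω' := by
            rw [hJ₁, hJ₂, Finset.prod_filter_mul_prod_filter_not]
    -- apply the induction hypothesis
    have hdep' : ∀ j ∈ J, ∀ ω' ω'' : ∀ i, α' i,
        (∀ i ∈ S' j, ω' i = ω'' i) → g j ω' = g j ω'' := by
      intro j hj ω' ω'' hagree
      rw [hg]
      simp only
      congr 1
      apply Finset.sum_congr rfl
      intro a _
      congr 2
      apply hdep j hj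
      intro i
      refine Fin.cases (fun _ => by simp [Fin.cons_zero]) (fun i' hi => ?_) i
      simp only [Fin.cons_succ]
      exact hagree i' (Finset.mem_filter.mpr ⟨Finset.mem_univ _, hi⟩)
    have hcard' : ∀ i : Fin s, (J.filter (fun j => i ∈ S' j)).card ≤ k := by
      intro i
      have : J.filter (fun j => i ∈ S' j) = J.filter (fun j => i.succ ∈ S j) := by
        apply Finset.filter_congr
        intro j _
        simp [hS']
      rw [this]
      exact hcard i.succ
    have hIH := ih α' (inst := fun i => inst i.succ) p' (fun i a => hp0 i.succ a)
      (fun i => hp1 i.succ) J g S' hg0 hdep' hcard'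
    -- identify the RHS of the IH with the goal's RHS
    have hRHS : ∀ j ∈ J, ∑ ω' : ∀ i, α' i, (∏ i, p' i (ω' i)) * g j ω' ^ k
        = ∑ ω, (∏ i, p i (ω i)) * f j ω ^ k := by
      intro j hj
      rw [hsplit (fun ω => (∏ i, p i (ω i)) * f j ω ^ k)]
      apply Finset.sum_congr rfl
      intro ω' _
      rw [hg]
      simp only
      rw [hrpowk _ (hinner0 j hj ω'), Finset.mul_sum]
      apply Finset.sum_congr rfl
      intro a _
      rw [hw a ω']
      ring
    calc ∑ ω, (∏ i, p i (ω i)) * ∏ j ∈ J, f j ω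
        = ∑ ω' : ∀ i, α' i, ∑ a, (∏ i, p i (Fin.cons a ω' i)) * ∏ j ∈ J, f j (Fin.cons a ω') :=
          hsplit _
      _ = ∑ ω' : ∀ i, α' i, (∏ i, p' i (ω' i)) * ∑ a, p 0 a * ∏ j ∈ J, f j (Fin.cons a ω') := by
          apply Finset.sum_congr rfl
          intro ω' _
          rw [Finset.mul_sum]
          apply Finset.sum_congr rfl
          intro a _
          rw [hw a ω']
          ring
      _ ≤ ∑ ω' : ∀ i, α' i, (∏ i, p' i (ω' i)) * ∏ j ∈ J, g j ω' := by
          apply Finset.sum_le_sum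
          intro ω' _
          exact mul_le_mul_of_nonneg_left (hkey ω') (hP'0 ω')
      _ ≤ ∏ j ∈ J, (∑ ω' : ∀ i, α' i, (∏ i, p' i (ω' i)) * g j ω' ^ k) ^ ((k:ℝ)⁻¹) := hIH
      _ = ∏ j ∈ J, (∑ ω, (∏ i, p i (ω i)) * f j ω ^ k) ^ ((k:ℝ)⁻¹) := by
          apply Finset.prod_congr rfl
          intro j hj
          rw [hRHS j hj]


theorem stmt_12 {s t k : ℕ} {α : Fin s → Type*} [∀ i, Fintype (α i)]
    (p : ∀ i, α i → ℝ) (hp0 : ∀ i a, 0 ≤ p i a) (hp1 : ∀ i, ∑ a, p i a = 1)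
    (ζ : Fin t → (∀ i, α i) → ℝ) (hval : ∀ j ω, ζ j ω = 0 ∨ ζ j ω = 1)
    (Sj : Fin t → Finset (Fin s))
    (hread : ∀ j : Fin t, ∀ ω ω' : ∀ i, α i, (∀ i ∈ Sj j, ω i = ω' i) → ζ j ω = ζ j ω')
    (hk : ∀ i : Fin s, (Finset.univ.filter (fun j : Fin t => i ∈ Sj j)).card ≤ k)
    (hkpos : 0 < k)
    (ρ lam : ℝ) (hρlam : ρ ≤ lam) (hlam : lam ≤ 1)
    (hmean : ∑ j : Fin t, ∑ ω : ∀ i, α i, (∏ i, p i (ω i)) * ζ j ω ≤ (t : ℝ) * ρ) :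
    ∑ ω ∈ Finset.univ.filter (fun ω : ∀ i, α i => lam * t < ∑ j, ζ j ω), ∏ i, p i (ω i) <
      Real.exp (-(lam * Real.log (lam / ρ) +
          (1 - lam) * Real.log ((1 - lam) / (1 - ρ))) * t / k) := by
  classical
  set P : (∀ i, α i) → ℝ := fun ω => ∏ i, p i (ω i) with hP
  have hP0 : ∀ ω, 0 ≤ P ω := fun ω => Finset.prod_nonneg fun i _ => hp0 i _
  have hPsum : ∑ ω, P ω = 1 := by
    rw [hP, ← Fintype.prod_sum]
    rw [Finset.prod_congr rfl fun i _ => hp1 i]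
    exact Finset.prod_const_one
  set X : (∀ i, α i) → ℝ := fun ω => ∑ j, ζ j ω with hX
  set ev := Finset.univ.filter (fun ω : ∀ i, α i => lam * t < X ω) with hev
  set L := ∑ ω ∈ ev, P ω with hL
  have hL0 : 0 ≤ L := Finset.sum_nonneg fun ω _ => hP0 ω
  rcases eq_or_lt_of_le hL0 with h0 | hLpos
  · rw [← h0]; exact Real.exp_pos _
  -- a witness in the event with positive probability
  obtain ⟨ω₁, hω₁ev, hPω₁⟩ := Finset.exists_ne_zero_of_sum_ne_zero hLpos.ne'
  have hPω₁pos : 0 < P ω₁ := (hP0 ω₁).lt_of_ne' hPω₁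
  have hXω₁ : lam * t < X ω₁ := (Finset.mem_filter.mp hω₁ev).2
  have hζ0 : ∀ j ω, 0 ≤ ζ j ω := by
    intro j ω; rcases hval j ω with h | h <;> rw [h] <;> norm_num
  have hζ1 : ∀ j ω, ζ j ω ≤ 1 := by
    intro j ω; rcases hval j ω with h | h <;> rw [h] <;> norm_num
  have hXle : ∀ ω, X ω ≤ t := by
    intro ω
    calc X ω ≤ ∑ _j : Fin t, (1:ℝ) := Finset.sum_le_sum fun j _ => hζ1 j ω
      _ = t := by simp
  have ht : 0 < t := by
    rcases Nat.eq_zero_or_pos t with h | h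
    · subst h
      have : X ω₁ = 0 := by rw [hX]; simp
      rw [this] at hXω₁
      simp at hXω₁
    · exact h
  have htR : (0:ℝ) < t := by exact_mod_cast ht
  have hkR : (0:ℝ) < k := by exact_mod_cast hkpos
  set μ : Fin t → ℝ := fun j => ∑ ω, P ω * ζ j ω with hμ
  have hμ0 : ∀ j, 0 ≤ μ j := fun j =>
    Finset.sum_nonneg fun ω _ => mul_nonneg (hP0 ω) (hζ0 j ω)
  have hμsum : ∑ j, μ j ≤ t * ρ := hmean
  have hρ0 : 0 < ρ := by
    have hρ0' : 0 ≤ ρ := by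
      have h1 : (0:ℝ) ≤ ∑ j, μ j := Finset.sum_nonneg fun j _ => hμ0 j
      nlinarith
    rcases eq_or_lt_of_le hρ0' with h | h
    · exfalso
      have hsum0 : ∑ j, μ j = 0 :=
        le_antisymm (by rw [← h] at hμsum; simpa using hμsum)
          (Finset.sum_nonneg fun j _ => hμ0 j)
      have hμj : ∀ j, μ j = 0 := by
        intro j
        exact (Finset.sum_eq_zero_iff_of_nonneg fun j _ => hμ0 j).mp hsum0 j (Finset.mem_univ j)
      have hzero : ∀ j, ζ j ω₁ = 0 := by
        intro j
        have := (Finset.sum_eq_zero_iff_of_nonneg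
          fun ω _ => mul_nonneg (hP0 ω) (hζ0 j ω)).mp (hμj j) ω₁ (Finset.mem_univ ω₁)
        rcases mul_eq_zero.mp this with h' | h'
        · exact absurd h' hPω₁
        · exact h'
      have hX0 : X ω₁ = 0 := by
        rw [hX]; exact Finset.sum_eq_zero fun j _ => hzero j
      rw [hX0] at hXω₁
      have : 0 ≤ lam * t := mul_nonneg (by linarith) htR.le
      linarith
    · exact h
  have hlam0 : 0 < lam := hρ0.trans_le hρlam
  have hlam1 : lam < 1 := by
    by_contra h
    push_neg at h
    have hlam1' : lam = 1 := le_antisymm hlam h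
    rw [hlam1'] at hXω₁
    have := hXle ω₁
    linarith [hXω₁, this]
  have h1lam : 0 < 1 - lam := by linarith
  have h1ρ : 0 < 1 - ρ := by linarith
  -- a point of positive probability outside the event
  have hω₀ : ∃ ω₀, 0 < P ω₀ ∧ X ω₀ ≤ lam * t := by
    by_contra hno
    push_neg at hno
    have hEX : ∑ ω, P ω * X ω = ∑ j, μ j := by
      rw [hμ]
      rw [Finset.sum_comm]
      apply Finset.sum_congr rfl
      intro ω _
      rw [hX, Finset.mul_sum]
    have hpos : 0 < ∑ ω, P ω * (X ω - lam * t) := by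
      apply Finset.sum_pos'
      · intro ω _
        rcases eq_or_lt_of_le (hP0 ω) with h | h
        · rw [← h]; simp
        · have := hno ω h
          have := le_of_lt this
          nlinarith [hno ω h]
      · exact ⟨ω₁, Finset.mem_univ ω₁, mul_pos hPω₁pos (by linarith)⟩
    have hexp : ∑ ω, P ω * (X ω - lam * t) = (∑ ω, P ω * X ω) - lam * t := by
      simp only [mul_sub]
      rw [Finset.sum_sub_distrib, ← Finset.sum_mul, hPsum, one_mul]
    rw [hexp, hEX] at hpos
    have : lam * t < t * ρ := by linarith
    nlinarith
  obtain ⟨ω₀, hPω₀, hXω₀⟩ := hω₀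
  -- parameters
  set c : ℝ := lam * (1 - ρ) / (ρ * (1 - lam)) with hc
  have hden : 0 < ρ * (1 - lam) := mul_pos hρ0 h1lam
  have hc0 : 0 < c := div_pos (mul_pos hlam0 h1ρ) hden
  have hc1 : 1 ≤ c := by
    rw [hc, le_div_iff₀ hden]
    nlinarith
  set β : ℝ := Real.log c / k with hβ
  have hβ0 : 0 ≤ β := div_nonneg (Real.log_nonneg hc1) hkR.le
  have hekβ : Real.exp (k * β) = c := by
    rw [hβ, mul_div_assoc']
    rw [mul_comm, mul_div_assoc, div_self hkR.ne', mul_one]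
    exact Real.exp_log hc0
  set f : Fin t → (∀ i, α i) → ℝ := fun j ω => Real.exp (β * ζ j ω) with hf
  set E := ∑ ω, P ω * Real.exp (β * X ω) with hE
  -- strict Markov
  set a : ℝ := β * (lam * t) with ha
  have hmarkov : Real.exp a * L < E := by
    have h1 : Real.exp a * L ≤ ∑ ω ∈ ev, P ω * Real.exp (β * X ω) := by
      rw [hL, Finset.mul_sum]
      apply Finset.sum_le_sum
      intro ω hω
      have hXω : lam * t < X ω := (Finset.mem_filter.mp hω).2
      have : Real.exp a ≤ Real.exp (β * X ω) := by
        apply Real.exp_le_exp.mpr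
        rw [ha]
        exact mul_le_mul_of_nonneg_left hXω.le hβ0
      calc Real.exp a * P ω = P ω * Real.exp a := mul_comm _ _
        _ ≤ P ω * Real.exp (β * X ω) := mul_le_mul_of_nonneg_left this (hP0 ω)
    have h2 : 0 < ∑ ω ∈ Finset.univ.filter (fun ω => ¬ (lam * t < X ω)),
        P ω * Real.exp (β * X ω) := by
      apply Finset.sum_pos'
      · intro ω _
        exact mul_nonneg (hP0 ω) (Real.exp_pos _).le
      · refine ⟨ω₀, ?_, mul_pos hPω₀ (Real.exp_pos _)⟩
        rw [Finset.mem_filter]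
        exact ⟨Finset.mem_univ _, not_lt.mpr hXω₀⟩
    have h3 : E = (∑ ω ∈ ev, P ω * Real.exp (β * X ω)) +
        ∑ ω ∈ Finset.univ.filter (fun ω => ¬ (lam * t < X ω)), P ω * Real.exp (β * X ω) := by
      rw [hE, hev]
      exact (Finset.sum_filter_add_sum_filter_not _ _ _).symm
    rw [h3]
    linarith
  have hmarkov' : L < Real.exp (-a) * E := by
    have := mul_lt_mul_of_pos_left hmarkov (Real.exp_pos (-a))
    rw [← mul_assoc, ← Real.exp_add, neg_add_cancel, Real.exp_zero, one_mul] at this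
    exact this
  -- Finner
  have hexpX : ∀ ω, Real.exp (β * X ω) = ∏ j, f j ω := by
    intro ω
    rw [hX, Finset.mul_sum, Real.exp_sum]
  have hfinner : E ≤ ∏ j, (∑ ω, P ω * f j ω ^ k) ^ ((k:ℝ)⁻¹) := by
    rw [hE, Finset.sum_congr rfl fun ω _ => by rw [hexpX ω]]
    exact lemC hkpos s α p hp0 hp1 Finset.univ f Sj
      (fun j _ ω => (Real.exp_pos _).le)
      (fun j _ ω ω' hag => by rw [hf]; simp only; rw [hread j ω ω' hag])
      (fun i => hk i)
  -- moments
  set r : Fin t → ℝ := fun j => 1 + (c - 1) * μ j with hr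
  have hmom : ∀ j, ∑ ω, P ω * f j ω ^ k = r j := by
    intro j
    have hpt : ∀ ω, f j ω ^ k = 1 + (c - 1) * ζ j ω := by
      intro ω
      rw [hf]
      simp only
      rw [← Real.exp_nat_mul]
      rcases hval j ω with h | h
      · rw [h]; simp
      · rw [h]
        rw [mul_one, mul_one, ← hekβ]
        push_cast
        ring_nf
    rw [Finset.sum_congr rfl fun ω _ => by rw [hpt ω]]
    rw [hr]
    simp only [mul_add]
    rw [Finset.sum_add_distrib]
    simp only [mul_one]
    rw [hPsum]
    congr 1
    rw [hμ]
    simp only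
    rw [Finset.mul_sum]
    apply Finset.sum_congr rfl
    intro ω _
    ring
  have hr1 : ∀ j, (1:ℝ) ≤ r j := by
    intro j
    rw [hr]
    simp only
    have := mul_nonneg (sub_nonneg.mpr hc1) (hμ0 j)
    linarith
  have hr0 : ∀ j, (0:ℝ) < r j := fun j => lt_of_lt_of_le one_pos (hr1 j)
  -- AM-GM over j
  set R : ℝ := 1 + (c - 1) * ρ with hR
  have hRpos : 0 < R := by
    have := mul_nonneg (sub_nonneg.mpr hc1) hρ0.le
    linarith
  have hgm : (∏ j, r j) ^ ((t:ℝ)⁻¹) ≤ R := by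
    have h1 : (∏ j, r j) ^ ((t:ℝ)⁻¹) = ∏ j, r j ^ ((t:ℝ)⁻¹) :=
      (Real.finset_prod_rpow _ _ (fun j _ => (hr0 j).le) _).symm
    rw [h1]
    have h2 : ∏ j, r j ^ ((t:ℝ)⁻¹) ≤ ∑ j, (t:ℝ)⁻¹ * r j := by
      apply Real.geom_mean_le_arith_mean_weighted
      · intro j _; positivity
      · rw [Finset.sum_const]
        simp [Finset.card_univ]
        rw [mul_inv_cancel₀ htR.ne']
      · intro j _; exact (hr0 j).le
    calc ∏ j, r j ^ ((t:ℝ)⁻¹) ≤ ∑ j, (t:ℝ)⁻¹ * r j := h2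
      _ = (t:ℝ)⁻¹ * ∑ j, r j := by rw [Finset.mul_sum]
      _ = (t:ℝ)⁻¹ * (t + (c - 1) * ∑ j, μ j) := by
          congr 1
          rw [hr]
          simp only
          rw [Finset.sum_add_distrib, Finset.sum_const, ← Finset.mul_sum]
          simp [Finset.card_univ]
      _ ≤ (t:ℝ)⁻¹ * (t + (c - 1) * (t * ρ)) := by
          apply mul_le_mul_of_nonneg_left _ (by positivity)
          have : (c - 1) * ∑ j, μ j ≤ (c - 1) * (t * ρ) :=
            mul_le_mul_of_nonneg_left hμsum (by linarith)
          linarith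
      _ = R := by
          rw [hR]
          field_simp
  have hprod_le : ∏ j, r j ≤ R ^ (t:ℝ) := by
    have hbase : (0:ℝ) ≤ ∏ j, r j := Finset.prod_nonneg fun j _ => (hr0 j).le
    have := Real.rpow_le_rpow (Real.rpow_nonneg hbase _) hgm htR.le
    rwa [← Real.rpow_mul hbase, inv_mul_cancel₀ htR.ne', Real.rpow_one] at this
  have hrhs_le : ∏ j, (∑ ω, P ω * f j ω ^ k) ^ ((k:ℝ)⁻¹) ≤ R ^ ((t:ℝ) * (k:ℝ)⁻¹) := by
    have h1 : ∏ j, (∑ ω, P ω * f j ω ^ k) ^ ((k:ℝ)⁻¹) = (∏ j, r j) ^ ((k:ℝ)⁻¹) := by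
      rw [Finset.prod_congr rfl fun j _ => by rw [hmom j]]
      exact Real.finset_prod_rpow _ _ (fun j _ => (hr0 j).le) _
    rw [h1]
    have hbase : (0:ℝ) ≤ ∏ j, r j := Finset.prod_nonneg fun j _ => (hr0 j).le
    calc (∏ j, r j) ^ ((k:ℝ)⁻¹) ≤ (R ^ (t:ℝ)) ^ ((k:ℝ)⁻¹) :=
          Real.rpow_le_rpow hbase hprod_le (by positivity)
      _ = R ^ ((t:ℝ) * (k:ℝ)⁻¹) := by rw [← Real.rpow_mul hRpos.le]
  -- final computation
  have hfinal : Real.exp (-a) * R ^ ((t:ℝ) * (k:ℝ)⁻¹) =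
      Real.exp (-(lam * Real.log (lam / ρ) +
        (1 - lam) * Real.log ((1 - lam) / (1 - ρ))) * t / k) := by
    rw [Real.rpow_def_of_pos hRpos, ← Real.exp_add]
    congr 1
    have hRval : R = (1 - ρ) / (1 - lam) := by
      rw [hR, hc]
      field_simp
      ring
    have hlogR : Real.log R = Real.log (1 - ρ) - Real.log (1 - lam) := by
      rw [hRval, Real.log_div h1ρ.ne' h1lam.ne']
    have hlogc : Real.log c = Real.log lam + Real.log (1 - ρ)
        - Real.log ρ - Real.log (1 - lam) := by
      rw [hc, Real.log_div (by positivity) (by positivity),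
        Real.log_mul hlam0.ne' h1ρ.ne', Real.log_mul hρ0.ne' h1lam.ne']
      ring
    have hlog1 : Real.log (lam / ρ) = Real.log lam - Real.log ρ :=
      Real.log_div hlam0.ne' hρ0.ne'
    have hlog2 : Real.log ((1 - lam) / (1 - ρ)) = Real.log (1 - lam) - Real.log (1 - ρ) :=
      Real.log_div h1lam.ne' h1ρ.ne'
    rw [ha, hβ, hlogc, hlogR, hlog1, hlog2]
    field_simp
    ring
  calc L < Real.exp (-a) * E := hmarkov'
    _ ≤ Real.exp (-a) * ∏ j, (∑ ω, P ω * f j ω ^ k) ^ ((k:ℝ)⁻¹) :=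
        mul_le_mul_of_nonneg_left hfinner (Real.exp_pos _).le
    _ ≤ Real.exp (-a) * R ^ ((t:ℝ) * (k:ℝ)⁻¹) :=
        mul_le_mul_of_nonneg_left hrhs_le (Real.exp_pos _).le
    _ = _ := hfinal
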